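/- Let κ be C¹ and positive and suppose (κ²/(κ²+τ²)^{3/2})·(τ/κ)' = m for a nonzero constant m, with τ/κ ≥ 0. Then τ can be expressed as τ(s) = κ(s)·((m∫₀ˢκ + A)²/(1-(m∫₀ˢκ + A)²))^{1/2} for some integration constant A, on any interval where |m∫₀ˢκ + A| < 1. -/

import Mathlib

open Real

theorem slant_helix_torsion_formula
    (I : Set ℝ) (hI : IsOpen I) (hIc : I.OrdConnected) (h0 : (0 : ℝ) ∈ I)
    (κ τ : ℝ → ℝ)
    (hκ : ContDiffOn ℝ 1 κ I) (hκpos : ∀ s ∈ I, 0 < κ s)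
    (hτ : ContinuousOn τ I)
    (hτκd : ∀ s ∈ I, DifferentiableAt ℝ (fun u => τ u / κ u) s)
    (hτκnonneg : ∀ s ∈ I, 0 ≤ τ s / κ s)
    (m : ℝ) (hm : m ≠ 0)
    (hσ : ∀ s ∈ I, (κ s) ^ 2 / ((κ s) ^ 2 + (τ s) ^ 2) ^ ((3 : ℝ) / 2) *
      deriv (fun u => τ u / κ u) s = m) :
    ∃ A : ℝ, ∀ s ∈ I, |m * (∫ u in (0 : ℝ)..s, κ u) + A| < 1 →
      τ s = κ s * Real.sqrt ((m * (∫ u in (0 : ℝ)..s, κ u) + A) ^ 2 /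
        (1 - (m * (∫ u in (0 : ℝ)..s, κ u) + A) ^ 2)) := by
  set f : ℝ → ℝ := fun u => τ u / κ u with hf
  set g : ℝ → ℝ := fun s => f s / Real.sqrt (1 + f s ^ 2) with hg
  have hS : ∀ s : ℝ, 0 < Real.sqrt (1 + f s ^ 2) := fun s =>
    Real.sqrt_pos.mpr (by positivity)
  have hSq : ∀ s : ℝ, Real.sqrt (1 + f s ^ 2) ^ 2 = 1 + f s ^ 2 := fun s =>
    Real.sq_sqrt (by positivity)
  have hgd : ∀ s ∈ I, HasDerivAt g (m * κ s) s := by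
    intro s hs
    have hκs := hκpos s hs
    have hfd : HasDerivAt f (deriv f s) s := (hτκd s hs).hasDerivAt
    have hτs : τ s = κ s * f s := by simp only [hf]; field_simp
    set S := Real.sqrt (1 + f s ^ 2) with hSdef
    have hSpos := hS s
    have hSne : S ≠ 0 := hSpos.ne'
    have hrpow : (κ s ^ 2 + τ s ^ 2) ^ ((3:ℝ)/2) = (κ s * S) ^ 3 := by
      have h1 : Real.sqrt (κ s ^ 2 + τ s ^ 2) = κ s * S := by
        have hsum : κ s ^ 2 + τ s ^ 2 = κ s ^ 2 * (1 + f s ^ 2) := by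
          rw [hτs]; ring
        rw [hsum, Real.sqrt_mul (by positivity), Real.sqrt_sq hκs.le]
      have h2 : (κ s ^ 2 + τ s ^ 2) ^ ((3:ℝ)/2)
          = (Real.sqrt (κ s ^ 2 + τ s ^ 2)) ^ 3 := by
        rw [Real.sqrt_eq_rpow, ← Real.rpow_natCast ((κ s ^ 2 + τ s ^ 2) ^ ((1:ℝ)/2)) 3,
          ← Real.rpow_mul (by positivity)]
        norm_num
      rw [h2, h1]
    have hderivf : deriv f s = m * κ s * S ^ 3 := by
      have h := hσ s hs
      rw [hrpow] at h
      have hκne : κ s ≠ 0 := hκs.ne'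
      field_simp at h
      have h2 : κ s ^ 2 * deriv f s = κ s ^ 2 * (m * κ s * S ^ 3) := by
        rw [h]; ring
      exact mul_left_cancel₀ (pow_ne_zero 2 hκne) h2
    -- derivative of sqrt (1 + f x ^ 2)
    have hinner : HasDerivAt (fun x => 1 + f x ^ 2) (2 * f s * deriv f s) s := by
      have := (hfd.pow 2).const_add 1
      simpa [mul_comm, mul_assoc, mul_left_comm] using this
    have hsqrt : HasDerivAt (fun x => Real.sqrt (1 + f x ^ 2))
        (f s * deriv f s / S) s := by
      have h1 : HasDerivAt Real.sqrt (1 / (2 * S)) (1 + f s ^ 2) := by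
        have := Real.hasDerivAt_sqrt (x := 1 + f s ^ 2) (by positivity)
        simpa [hSdef] using this
      have := h1.comp s hinner
      refine this.congr_deriv ?_
      ring
    have hdg : HasDerivAt g
        ((deriv f s * S - f s * (f s * deriv f s / S)) / S ^ 2) s :=
      hfd.div hsqrt hSne
    convert hdg using 1
    rw [hderivf]
    have hSq' := hSq s
    field_simp
    linear_combination (-1 : ℝ) * hSq'
  refine ⟨g 0, ?_⟩
  intro s hs _
  have hκs := hκpos s hs
  have hsub : Set.uIcc 0 s ⊆ I := hIc.uIcc_subset h0 hs
  have hcont : ContinuousOn (fun x => m * κ x) (Set.uIcc 0 s) :=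
    continuousOn_const.mul (hκ.continuousOn.mono hsub)
  have hFTC : ∫ x in (0:ℝ)..s, m * κ x = g s - g 0 :=
    intervalIntegral.integral_eq_sub_of_hasDerivAt
      (fun x hx => hgd x (hsub hx)) (hcont.intervalIntegrable)
  have hmint : m * (∫ u in (0:ℝ)..s, κ u) = g s - g 0 := by
    rw [← hFTC, intervalIntegral.integral_const_mul]
  have hgs : m * (∫ u in (0:ℝ)..s, κ u) + g 0 = g s := by linarith
  rw [hgs]
  have hfs : 0 ≤ f s := hτκnonneg s hs
  have h1 : g s ^ 2 = f s ^ 2 / (1 + f s ^ 2) := by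
    rw [hg]; simp only [div_pow, hSq s]
  have h2 : g s ^ 2 / (1 - g s ^ 2) = f s ^ 2 := by
    rw [h1]
    have : (0:ℝ) < 1 + f s ^ 2 := by positivity
    field_simp
    ring
  rw [h2, Real.sqrt_sq hfs]
  rw [hf]
  field_simp
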